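/- Let $a_1,\ldots,a_n$ be distinct elements of a field $F$, $v_1,\ldots,v_n \in F^*$, $1 \leq k < n$, and $B \in F^{k\times(n-k)}$. The $(\mathcal{L},\mathcal{P})$-TGRS code $\mathcal{C}(B)$ with generator matrix whose $(i,r)$ entry is $v_r(a_r^i + \sum_{j=0}^{n-k-1} b_{i,j} a_r^{k+j})$ is MDS if and only if for every $k$-subset $\mathcal{T} \subseteq \{1,\ldots,n\}$, $\det(I_k + B F_{\mathcal{T}}) \neq 0$, where $F_{\mathcal{T}} \in F^{(n-k)\times k}$ has entries $f_{t,s}$ determined by $a_{t_r}^{k+t} = \sum_{s=0}^{k-1} f_{t,s} a_{t_r}^{s}$ for $t_r \in \mathcal{T}$. -/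

import Mathlib

open Polynomial Finset Matrix

section Aux

variable {F : Type*} [Field F]

private lemma tgrs_coeff_combo {n k : ℕ} (b : Fin k → Fin (n - k) → F) (g : Fin k → F[X])
    (hg : ∀ i, g i = X ^ (i : ℕ) + ∑ j : Fin (n - k), C (b i j) * X ^ (k + (j : ℕ)))
    (c : Fin k → F) (i : Fin k) :
    (∑ i', c i' • g i').coeff ↑i = c i := by
  have hgc : ∀ i' : Fin k, (g i').coeff ↑i = if (i : ℕ) = (i' : ℕ) then 1 else 0 := by
    intro i'
    have hne : ∀ j : Fin (n - k), (i : ℕ) ≠ k + (j : ℕ) := fun j => by have := i.2; omega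
    rw [hg]
    simp [coeff_X_pow, finset_sum_coeff, coeff_C_mul, hne]
  simp only [finset_sum_coeff, coeff_smul, hgc, smul_eq_mul, mul_ite, mul_one, mul_zero]
  simp [Fin.val_eq_val]

private lemma tgrs_deg_combo {n k : ℕ} (hk : 1 ≤ k) (hkn : k < n)
    (b : Fin k → Fin (n - k) → F) (g : Fin k → F[X])
    (hg : ∀ i, g i = X ^ (i : ℕ) + ∑ j : Fin (n - k), C (b i j) * X ^ (k + (j : ℕ)))
    (c : Fin k → F) :
    (∑ i, c i • g i).natDegree < n := by
  have h1 : ∀ i : Fin k, (g i).natDegree ≤ n - 1 := by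
    intro i
    rw [hg]
    refine le_trans (natDegree_add_le _ _) (max_le ?_ ?_)
    · rw [natDegree_X_pow]; have := i.2; omega
    · refine natDegree_sum_le_of_forall_le _ _ fun j _ => ?_
      refine le_trans (natDegree_C_mul_X_pow_le _ _) ?_
      have := j.2; omega
  have h2 := natDegree_sum_le_of_forall_le Finset.univ (fun i => c i • g i)
    (fun i _ => le_trans (natDegree_smul_le _ _) (h1 i))
  have h3 : (∑ i, c i • g i).natDegree ≤ n - 1 := h2
  omega

private lemma tgrs_eval_combo {k : ℕ} (g : Fin k → F[X]) (c : Fin k → F) (x : F) :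
    (∑ i, c i • g i).eval x = ∑ i, c i * (g i).eval x := by
  simp [eval_finset_sum, smul_eq_C_mul]

end Aux

open Polynomial in
/-- Theorem 1: the `(𝓛,𝓟)`-TGRS code is MDS iff `det(I_k + B F_𝒯) ≠ 0` for every
`k`-subset `𝒯` of coordinates, where `F_𝒯` is determined by
`a_{t_r}^{k+t} = ∑_s f_{t,s} a_{t_r}^s`. -/
theorem stmt_12 {F : Type*} [Field F] [Fintype F] [DecidableEq F]
    (n k : ℕ) (hk : 1 ≤ k) (hkn : k < n)
    (a : Fin n → F) (ha : Function.Injective a)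
    (v : Fin n → F) (hv : ∀ i, v i ≠ 0)
    (b : Fin k → Fin (n - k) → F)
    (g : Fin k → Polynomial F)
    (hg : ∀ i, g i = X ^ (i : ℕ) + ∑ j : Fin (n - k), C (b i j) * X ^ (k + (j : ℕ)))
    (Code : Set (Fin n → F))
    (hCode : Code =
      {w | ∃ f ∈ Submodule.span F (Set.range g), w = fun r => v r * f.eval (a r)}) :
    ((∀ w ∈ Code, w ≠ 0 → n - k + 1 ≤ hammingNorm w) ∧
        ∃ w ∈ Code, w ≠ 0 ∧ hammingNorm w = n - k + 1) ↔
      ∀ T : Fin k → Fin n, Function.Injective T →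
        ∀ FT : Matrix (Fin (n - k)) (Fin k) F,
          (∀ (t : Fin (n - k)) (r : Fin k),
            a (T r) ^ (k + (t : ℕ)) = ∑ s : Fin k, FT t s * a (T r) ^ (s : ℕ)) →
          (1 + Matrix.of b * FT).det ≠ 0 := by
  classical
  subst hCode
  -- weight formula
  have hwnorm : ∀ f : F[X],
      hammingNorm (fun r => v r * f.eval (a r)) =
        n - #(Finset.univ.filter fun r => f.eval (a r) = 0) := by
    intro f
    have hset : (Finset.univ.filter fun r => v r * f.eval (a r) ≠ 0) =
        (Finset.univ.filter fun r => f.eval (a r) = 0)ᶜ := by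
      ext r
      simp [hv r]
    simp only [hammingNorm]
    rw [Finset.filter_congr_decidable]
    rw [hset, Finset.card_compl, Fintype.card_fin]
  -- nonvanishing of nonzero small-degree polys
  have hnzero : ∀ f : F[X], f ≠ 0 → f.natDegree < n → ∃ r, f.eval (a r) ≠ 0 := by
    intro f hf hdeg
    by_contra h
    push_neg at h
    exact hf (Polynomial.eq_zero_of_natDegree_lt_card_of_eval_eq_zero f ha h
      (by simpa using hdeg))
  -- vecMul link
  have hvm : ∀ {m : ℕ} (T : Fin m → Fin n) (c : Fin k → F),
      c ᵥ* (Matrix.of fun i r => (g i).eval (a (T r))) =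
        fun r => (∑ i, c i • g i).eval (a (T r)) := by
    intro m T c
    funext r
    simp [Matrix.vecMul, dotProduct, tgrs_eval_combo]
  -- matrix factorization
  have hM : ∀ (T : Fin k → Fin n) (FT : Matrix (Fin (n - k)) (Fin k) F),
      (∀ (t : Fin (n - k)) (r : Fin k),
        a (T r) ^ (k + (t : ℕ)) = ∑ s : Fin k, FT t s * a (T r) ^ (s : ℕ)) →
      (Matrix.of fun i r => (g i).eval (a (T r))) =
        (1 + Matrix.of b * FT) * (Matrix.vandermonde fun r => a (T r))ᵀ := by
    intro T FT hFT
    ext i r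
    simp only [Matrix.mul_apply, Matrix.add_apply, Matrix.one_apply, Matrix.of_apply,
      Matrix.transpose_apply, Matrix.vandermonde_apply]
    rw [hg]
    simp only [eval_add, eval_pow, eval_X, eval_finset_sum, eval_mul, eval_C]
    have hswap : (∑ j : Fin (n - k), b i j * a (T r) ^ (k + (j : ℕ)))
        = ∑ s : Fin k, (∑ j : Fin (n - k), b i j * FT j s) * a (T r) ^ (s : ℕ) :=
      calc (∑ j : Fin (n - k), b i j * a (T r) ^ (k + (j : ℕ)))
          = ∑ j : Fin (n - k), ∑ s : Fin k, b i j * (FT j s * a (T r) ^ (s : ℕ)) :=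
            Finset.sum_congr rfl fun j _ => by rw [hFT j r, Finset.mul_sum]
        _ = ∑ s : Fin k, ∑ j : Fin (n - k), b i j * (FT j s * a (T r) ^ (s : ℕ)) :=
            Finset.sum_comm
        _ = ∑ s : Fin k, (∑ j : Fin (n - k), b i j * FT j s) * a (T r) ^ (s : ℕ) := by
            refine Finset.sum_congr rfl fun s _ => ?_
            rw [Finset.sum_mul]
            exact Finset.sum_congr rfl fun j _ => (mul_assoc _ _ _).symm
    rw [hswap]
    have hxi : a (T r) ^ (i : ℕ)
        = ∑ s : Fin k, (if i = s then (1 : F) else 0) * a (T r) ^ (s : ℕ) := by simp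
    rw [hxi, ← Finset.sum_add_distrib]
    exact Finset.sum_congr rfl fun s _ => (add_mul _ _ _).symm
  have hdetV : ∀ T : Fin k → Fin n, Function.Injective T →
      ((Matrix.vandermonde fun r => a (T r))ᵀ).det ≠ 0 := by
    intro T hT
    rw [Matrix.det_transpose]
    exact Matrix.det_vandermonde_ne_zero_iff.mpr fun x y hxy => hT (ha hxy)
  have hdetiff : ∀ (T : Fin k → Fin n), Function.Injective T →
      ∀ (FT : Matrix (Fin (n - k)) (Fin k) F),
      (∀ (t : Fin (n - k)) (r : Fin k),
        a (T r) ^ (k + (t : ℕ)) = ∑ s : Fin k, FT t s * a (T r) ^ (s : ℕ)) →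
      ((1 + Matrix.of b * FT).det ≠ 0 ↔
        (Matrix.of fun i r => (g i).eval (a (T r))).det ≠ 0) := by
    intro T hT FT hFT
    rw [hM T FT hFT, Matrix.det_mul, mul_ne_zero_iff]
    exact (and_iff_left (hdetV T hT)).symm
  -- Lagrange: FT exists for any injective T
  have hFTex : ∀ T : Fin k → Fin n, Function.Injective T →
      ∃ FT : Matrix (Fin (n - k)) (Fin k) F,
        ∀ (t : Fin (n - k)) (r : Fin k),
          a (T r) ^ (k + (t : ℕ)) = ∑ s : Fin k, FT t s * a (T r) ^ (s : ℕ) := by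
    intro T hT
    have hinj : Set.InjOn (fun r => a (T r)) ↑(Finset.univ : Finset (Fin k)) :=
      fun x _ y _ h => hT (ha h)
    refine ⟨fun t s =>
      (Lagrange.interpolate Finset.univ (fun r => a (T r))
        (fun r => a (T r) ^ (k + (t : ℕ)))).coeff s, fun t r => ?_⟩
    set p := Lagrange.interpolate Finset.univ (fun r => a (T r))
      (fun r => a (T r) ^ (k + (t : ℕ))) with hp
    have hdeg : p.degree < (k : WithBot ℕ) := by
      have := Lagrange.degree_interpolate_lt (fun r => a (T r) ^ (k + (t : ℕ))) hinj
      rw [Finset.card_univ, Fintype.card_fin] at this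
      exact this
    have hnd : p.natDegree < k := by
      rcases eq_or_ne p 0 with h | h
      · simp [h]; omega
      · exact (Polynomial.natDegree_lt_iff_degree_lt h).mpr (by simpa using hdeg)
    have heval := Lagrange.eval_interpolate_at_node
      (fun r => a (T r) ^ (k + (t : ℕ))) hinj (Finset.mem_univ r)
    rw [show a (T r) ^ (k + (t : ℕ)) = p.eval (a (T r)) from heval.symm,
      Polynomial.eval_eq_sum_range' hnd]
    exact (Fin.sum_univ_eq_sum_range (fun s => p.coeff s * a (T r) ^ s) k).symm
  constructor
  · rintro ⟨hbound, -⟩ T hT FT hFT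
    rw [hdetiff T hT FT hFT]
    intro hdet0
    obtain ⟨c, hc, hcM⟩ := Matrix.exists_vecMul_eq_zero_iff.mpr hdet0
    set f := ∑ i, c i • g i with hf
    have hfne : f ≠ 0 := by
      obtain ⟨i, hi⟩ := Function.ne_iff.mp hc
      intro h0
      apply hi
      have hco := tgrs_coeff_combo b g hg c i
      rw [← hf, h0] at hco
      simpa using hco.symm
    have hfspan : f ∈ Submodule.span F (Set.range g) :=
      (Submodule.mem_span_range_iff_exists_fun F).mpr ⟨c, rfl⟩
    have hwmem : (fun r => v r * f.eval (a r)) ∈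
        {w | ∃ f ∈ Submodule.span F (Set.range g), w = fun r => v r * f.eval (a r)} :=
      ⟨f, hfspan, rfl⟩
    have hwne : (fun r => v r * f.eval (a r)) ≠ 0 := by
      obtain ⟨r, hr⟩ := hnzero f hfne (tgrs_deg_combo hk hkn b g hg c)
      intro h0
      have h1 := congrFun h0 r
      simp only [Pi.zero_apply, mul_eq_zero] at h1
      rcases h1 with h1 | h1
      · exact hv r h1
      · exact hr h1
    have hineq := hbound _ hwmem hwne
    rw [hwnorm f] at hineq
    have hsub : Finset.univ.image T ⊆ Finset.univ.filter fun r => f.eval (a r) = 0 := by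
      intro x hx
      obtain ⟨r', -, rfl⟩ := Finset.mem_image.mp hx
      simp only [Finset.mem_filter, Finset.mem_univ, true_and]
      have h2 := congrFun hcM r'
      rw [hvm T c] at h2
      simpa [← hf] using h2
    have hk' : k ≤ #(Finset.univ.filter fun r => f.eval (a r) = 0) := by
      calc k = #(Finset.univ.image T) := by
              rw [Finset.card_image_of_injective _ hT, Finset.card_univ, Fintype.card_fin]
        _ ≤ _ := Finset.card_le_card hsub
    omega
  · intro hdet
    have hbound : ∀ w ∈
        {w | ∃ f ∈ Submodule.span F (Set.range g), w = fun r => v r * f.eval (a r)},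
        w ≠ 0 → n - k + 1 ≤ hammingNorm w := by
      rintro w ⟨f, hfspan, rfl⟩ hwne
      obtain ⟨c, hcf⟩ := (Submodule.mem_span_range_iff_exists_fun F).mp hfspan
      have hfne : f ≠ 0 := by
        intro h0
        exact hwne (by funext r; simp [h0])
      by_contra hlt
      push_neg at hlt
      rw [hwnorm f] at hlt
      set Z := Finset.univ.filter fun r => f.eval (a r) = 0 with hZ
      have hZle : #Z ≤ n := le_trans (Finset.card_filter_le _ _) (by simp)
      have hkZ : k ≤ #Z := by omega
      obtain ⟨Z', hZ'sub, hZ'card⟩ := Finset.exists_subset_card_eq hkZ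
      set T : Fin k → Fin n := fun r => ((Z'.orderIsoOfFin hZ'card r : Fin n)) with hT
      have hTinj : Function.Injective T := fun x y hxy =>
        (Z'.orderIsoOfFin hZ'card).injective (Subtype.ext hxy)
      obtain ⟨FT, hFT⟩ := hFTex T hTinj
      have hdM := (hdetiff T hTinj FT hFT).mp (hdet T hTinj FT hFT)
      have hcne : c ≠ 0 := by
        rintro rfl
        apply hfne
        rw [← hcf]
        simp
      refine hdM (Matrix.exists_vecMul_eq_zero_iff.mp ⟨c, hcne, ?_⟩)
      rw [hvm T c]
      funext r
      have hmem : T r ∈ Z := hZ'sub (Z'.orderIsoOfFin hZ'card r).2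
      rw [hZ, Finset.mem_filter] at hmem
      simp [hcf, hmem.2]
    refine ⟨hbound, ?_⟩
    -- existence of a codeword of weight exactly n - k + 1
    set e : Fin (k - 1) → Fin n := fun r => ⟨r.1, by have := r.2; omega⟩ with he
    have heinj : Function.Injective e := fun x y h => by
      apply Fin.ext
      simpa [he, Fin.ext_iff] using h
    set N : Matrix (Fin k) (Fin (k - 1)) F := Matrix.of fun i r => (g i).eval (a (e r))
      with hN
    have hnotinj : ¬ Function.Injective N.vecMulLinear := by
      intro hinj
      have hle := LinearMap.finrank_le_finrank_of_injective hinj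
      simp only [Module.finrank_pi, Fintype.card_fin] at hle
      omega
    obtain ⟨x, y, hxy, hne⟩ := Function.not_injective_iff.mp hnotinj
    set c := x - y with hc
    have hc0 : c ≠ 0 := sub_ne_zero.mpr hne
    have hcN : c ᵥ* N = 0 := by
      rw [← Matrix.vecMulLinear_apply, hc, map_sub, hxy, sub_self]
    set f := ∑ i, c i • g i with hf
    have hfne : f ≠ 0 := by
      obtain ⟨i, hi⟩ := Function.ne_iff.mp hc0
      intro h0
      apply hi
      have hco := tgrs_coeff_combo b g hg c i
      rw [← hf, h0] at hco
      simpa using hco.symm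
    have hfspan : f ∈ Submodule.span F (Set.range g) :=
      (Submodule.mem_span_range_iff_exists_fun F).mpr ⟨c, rfl⟩
    have hwmem : (fun r => v r * f.eval (a r)) ∈
        {w | ∃ f ∈ Submodule.span F (Set.range g), w = fun r => v r * f.eval (a r)} :=
      ⟨f, hfspan, rfl⟩
    have hwne : (fun r => v r * f.eval (a r)) ≠ 0 := by
      obtain ⟨r, hr⟩ := hnzero f hfne (tgrs_deg_combo hk hkn b g hg c)
      intro h0
      have h1 := congrFun h0 r
      simp only [Pi.zero_apply, mul_eq_zero] at h1
      rcases h1 with h1 | h1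
      · exact hv r h1
      · exact hr h1
    refine ⟨_, hwmem, hwne, ?_⟩
    have hge := hbound _ hwmem hwne
    have hsub : Finset.univ.image e ⊆ Finset.univ.filter fun r => f.eval (a r) = 0 := by
      intro z hz
      obtain ⟨r', -, rfl⟩ := Finset.mem_image.mp hz
      simp only [Finset.mem_filter, Finset.mem_univ, true_and]
      have h2 := congrFun hcN r'
      rw [hvm e c] at h2
      simpa [← hf] using h2
    have hk' : k - 1 ≤ #(Finset.univ.filter fun r => f.eval (a r) = 0) := by
      calc k - 1 = #(Finset.univ.image e) := by
              rw [Finset.card_image_of_injective _ heinj, Finset.card_univ, Fintype.card_fin]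
        _ ≤ _ := Finset.card_le_card hsub
    rw [hwnorm f] at hge ⊢
    omega
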